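/- A real quadratic irrational w has a purely periodic '−' (minus) continued fraction expansion if and only if 0 < w̃ < 1 < w, where w̃ is the Galois conjugate of w. -/

import Mathlib

noncomputable def mIter (x : ℝ) (n : ℕ) : ℝ := (fun y => ((⌈y⌉ : ℝ) - y)⁻¹)^[n] x

noncomputable def mDigit (x : ℝ) (n : ℕ) : ℤ := ⌈mIter x n⌉

lemma mIter_zero (x : ℝ) : mIter x 0 = x := rfl

lemma mIter_succ (x : ℝ) (n : ℕ) :
    mIter x (n + 1) = ((mDigit x n : ℝ) - mIter x n)⁻¹ := by
  simp [mIter, mDigit, Function.iterate_succ_apply']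

lemma mIter_add (x : ℝ) (m n : ℕ) : mIter x (m + n) = mIter (mIter x n) m := by
  simp [mIter, Function.iterate_add_apply]

lemma irr_mIter {x : ℝ} (hx : Irrational x) (n : ℕ) : Irrational (mIter x n) := by
  induction n with
  | zero => exact hx
  | succ k ih => rw [mIter_succ]; exact (ih.intCast_sub (mDigit x k)).inv

lemma mIter_mem {x : ℝ} (hx : Irrational x) (n : ℕ) :
    (mDigit x n : ℝ) - 1 < mIter x n ∧ mIter x n < mDigit x n := by
  refine ⟨by have := Int.ceil_lt_add_one (mIter x n); unfold mDigit; linarith, ?_⟩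
  exact lt_of_le_of_ne (Int.le_ceil _) ((irr_mIter hx n).ne_int _)

lemma one_lt_mIter {x : ℝ} (hx : Irrational x) (n : ℕ) : 1 < mIter x (n + 1) := by
  rw [mIter_succ]
  have h := mIter_mem hx n
  have h1 : 0 < (mDigit x n : ℝ) - mIter x n := by linarith [h.2]
  have h2 : (mDigit x n : ℝ) - mIter x n < 1 := by linarith [h.1]
  rw [lt_inv_comm₀ (by norm_num) h1]
  simpa using h2

lemma two_le_digit_of_one_lt {x : ℝ} {n : ℕ} (h : 1 < mIter x n) : 2 ≤ mDigit x n := by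
  have h2 : (1 : ℝ) < mDigit x n := lt_of_lt_of_le h (Int.le_ceil _)
  have : (1 : ℤ) < mDigit x n := by exact_mod_cast h2
  omega
lemma eq_of_digits_eq {x y : ℝ} (hx : Irrational x) (hy : Irrational y)
    (h : ∀ n, mDigit x n = mDigit y n) : x = y := by
  by_contra hne
  set d : ℕ → ℝ := fun n => |mIter x n - mIter y n| with hd
  have hd0 : 0 < d 0 := by
    simp only [hd, mIter]
    simpa using sub_ne_zero_of_ne hne
  have key : ∀ n, 0 < d n → d n + d n ^ 2 ≤ d (n + 1) ∧ 0 < d (n + 1) := by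
    intro n hdn
    have hxm := mIter_mem hx n
    have hym := mIter_mem hy n
    rw [h n] at hxm
    set b : ℝ := (mDigit y n : ℝ)
    set s : ℝ := b - mIter x n with hs
    set t : ℝ := b - mIter y n with ht
    have hs0 : 0 < s := by simp [hs]; linarith [hxm.2]
    have hs1 : s < 1 := by simp [hs]; linarith [hxm.1]
    have ht0 : 0 < t := by simp [ht]; linarith [hym.2]
    have ht1 : t < 1 := by simp [ht]; linarith [hym.1]
    have hst0 : 0 < s * t := by positivity
    have hdst : d n = |t - s| := by
      simp only [hd, hs, ht]
      congr 1; ring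
    have hsucc : d (n + 1) = d n / (s * t) := by
      simp only [hd]
      rw [mIter_succ, mIter_succ, h n,
          show ((mDigit y n : ℝ) - mIter x n) = s from rfl,
          show ((mDigit y n : ℝ) - mIter y n) = t from rfl]
      have he : s⁻¹ - t⁻¹ = (mIter x n - mIter y n) / (s * t) := by
        field_simp
        ring
      rw [he, abs_div, abs_of_pos hst0]
    have hst : s * t < 1 - d n := by
      rcases le_total s t with hle | hle
      · have : s = t - |t - s| := by rw [abs_of_nonneg (by linarith)]; ring
        rw [hdst]
        nlinarith [abs_nonneg (t - s)]
      · have : t = s - |t - s| := by rw [abs_of_nonpos (by linarith)]; ring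
        rw [hdst]
        nlinarith [abs_nonneg (t - s)]
    have hdn1 : d n < 1 := by nlinarith
    constructor
    · rw [hsucc, le_div_iff₀ hst0]
      nlinarith
    · rw [hsucc]; positivity
  have mono : ∀ n, d 0 + n * d 0 ^ 2 ≤ d n ∧ 0 < d n := by
    intro n
    induction n with
    | zero => simpa using hd0
    | succ k ih =>
        obtain ⟨h1, h2⟩ := key k ih.2
        refine ⟨?_, h2⟩
        have : d 0 ≤ d k := by nlinarith [ih.1, sq_nonneg (d 0)]
        push_cast
        nlinarith [ih.1]
  obtain ⟨n, hn⟩ := exists_nat_gt (1 / d 0 ^ 2)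
  have h1 : 1 < n * d 0 ^ 2 := by
    rw [div_lt_iff₀ (by positivity)] at hn
    nlinarith
  have h2 := (mono n).1
  have hxm := mIter_mem hx n
  have hym := mIter_mem hy n
  rw [h n] at hxm
  have : d n < 1 := by
    simp only [hd]
    rw [abs_sub_lt_iff]
    constructor <;> linarith [hxm.1, hxm.2, hym.1, hym.2]
  linarith [hd0]
noncomputable def cIter (w v : ℝ) : ℕ → ℝ
  | 0 => v
  | n + 1 => ((mDigit w n : ℝ) - cIter w v n)⁻¹

lemma rep_unique {w : ℝ} (hw : Irrational w) {q r q' r' : ℚ}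
    (h : (q : ℝ) + r * w = q' + r' * w) : q = q' ∧ r = r' := by
  by_cases hr : r = r'
  · subst hr
    have : (q : ℝ) = q' := by linarith
    exact ⟨by exact_mod_cast this, rfl⟩
  · exfalso
    have hrr : ((r - r' : ℚ) : ℝ) ≠ 0 := by
      exact_mod_cast sub_ne_zero_of_ne hr
    apply hw
    refine ⟨(q' - q) / (r - r'), ?_⟩
    have h2 : ((r : ℝ) - r') * w = (q' : ℝ) - q := by linarith
    push_cast
    rw [eq_comm, eq_div_iff (by exact_mod_cast hrr : ((r:ℝ) - r') ≠ 0)]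
    linarith

lemma irr_comb {w : ℝ} (hw : Irrational w) {q r : ℚ} (hr : r ≠ 0) :
    Irrational ((q : ℝ) + r * w) := ((hw.ratCast_mul hr).ratCast_add (q := q))

lemma inv_comb {w v : ℝ} (hw : Irrational w) (hv : Irrational v) {s p : ℚ}
    (hs : w + v = (s : ℝ)) (hp : w * v = (p : ℝ)) (q r : ℚ) (hr : r ≠ 0) :
    ∃ q' r' : ℚ, r' ≠ 0 ∧ ((q : ℝ) + r * w)⁻¹ = (q' : ℝ) + r' * w ∧
      ((q : ℝ) + r * v)⁻¹ = (q' : ℝ) + r' * v := by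
  set D : ℚ := q ^ 2 + q * r * s + r ^ 2 * p with hD
  have hprod : ((q : ℝ) + r * w) * ((q : ℝ) + r * v) = (D : ℝ) := by
    have h1 : ((q : ℝ) + r * w) * ((q : ℝ) + r * v)
        = (q : ℝ) ^ 2 + (q : ℝ) * r * (w + v) + (r : ℝ) ^ 2 * (w * v) := by ring
    rw [h1, hs, hp, hD]; push_cast; ring
  have hxirr : Irrational ((q : ℝ) + r * w) := irr_comb hw hr
  have hvirr : Irrational ((q : ℝ) + r * v) := irr_comb hv hr
  have hxne : ((q : ℝ) + r * w) ≠ 0 := fun h0 => (h0 ▸ hxirr) ⟨0, by norm_num⟩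
  have hvne : ((q : ℝ) + r * v) ≠ 0 := fun h0 => (h0 ▸ hvirr) ⟨0, by norm_num⟩
  have hDneR : (D : ℝ) ≠ 0 := by rw [← hprod]; exact mul_ne_zero hxne hvne
  have hDne : D ≠ 0 := fun h0 => hDneR (by rw [h0]; norm_num)
  refine ⟨(q + r * s) / D, -r / D, by simp [hr, hDne], ?_, ?_⟩
  · apply inv_eq_of_mul_eq_one_right
    have hl : (((q + r * s) / D : ℚ) : ℝ) + ((-r / D : ℚ) : ℝ) * w
        = ((q : ℝ) + r * v) / D := by
      have hv' : v = (s : ℝ) - w := by linarith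
      rw [hv']; push_cast; field_simp
      ring
    rw [hl]; field_simp [hprod]; exact hprod
  · apply inv_eq_of_mul_eq_one_right
    have hl : (((q + r * s) / D : ℚ) : ℝ) + ((-r / D : ℚ) : ℝ) * v
        = ((q : ℝ) + r * w) / D := by
      have hw' : w = (s : ℝ) - v := by linarith
      rw [hw']; push_cast; field_simp
      ring
    rw [hl]; field_simp; linarith [hprod]

lemma cIter_rep {w v : ℝ} (hw : Irrational w) {s p : ℚ}
    (hs : w + v = (s : ℝ)) (hp : w * v = (p : ℝ)) (n : ℕ) :
    ∃ q r : ℚ, r ≠ 0 ∧ mIter w n = (q : ℝ) + r * w ∧ cIter w v n = (q : ℝ) + r * v := by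
  have hv : Irrational v := by
    have hv' : v = (s : ℝ) - w := by linarith
    rw [hv']; exact hw.ratCast_sub (q := s)
  induction n with
  | zero => exact ⟨0, 1, one_ne_zero, by simp [mIter], by simp [cIter]⟩
  | succ k ih =>
      obtain ⟨q, r, hr, hxq, hvq⟩ := ih
      obtain ⟨q', r', hr', h1, h2⟩ := inv_comb hw hv hs hp ((mDigit w k : ℚ) - q) (-r)
        (neg_ne_zero.mpr hr)
      refine ⟨q', r', hr', ?_, ?_⟩
      · rw [mIter_succ, hxq, show ((mDigit w k : ℝ)) - ((q:ℝ) + r * w)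
          = (((mDigit w k : ℚ) - q : ℚ) : ℝ) + ((-r : ℚ) : ℝ) * w by push_cast; ring]
        exact h1
      · rw [show cIter w v (k+1) = ((mDigit w k : ℝ) - cIter w v k)⁻¹ from rfl, hvq,
          show ((mDigit w k : ℝ)) - ((q:ℝ) + r * v)
          = (((mDigit w k : ℚ) - q : ℚ) : ℝ) + ((-r : ℚ) : ℝ) * v by push_cast; ring]
        exact h2

lemma cIter_fun {w v : ℝ} (hw : Irrational w) {s p : ℚ}
    (hs : w + v = (s : ℝ)) (hp : w * v = (p : ℝ)) {m n : ℕ}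
    (h : mIter w m = mIter w n) : cIter w v m = cIter w v n := by
  obtain ⟨q, r, hr, hxq, hvq⟩ := cIter_rep hw hs hp m
  obtain ⟨q', r', hr', hxq', hvq'⟩ := cIter_rep hw hs hp n
  rw [hxq, hxq'] at h
  obtain ⟨h1, h2⟩ := rep_unique hw h
  rw [hvq, hvq', h1, h2]

lemma vieta {x u A B C : ℝ} (hA : A ≠ 0) (hxu : x ≠ u)
    (h1 : A * x ^ 2 + B * x + C = 0) (h2 : A * u ^ 2 + B * u + C = 0) :
    B = -A * (x + u) ∧ C = A * (x * u) := by
  have hsub : (x - u) * (A * (x + u) + B) = 0 := by nlinarith [h1, h2]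
  have hxu' : x - u ≠ 0 := sub_ne_zero_of_ne hxu
  have hB : A * (x + u) + B = 0 := by
    rcases mul_eq_zero.mp hsub with h | h
    · exact absurd h hxu'
    · exact h
  constructor
  · linarith
  · linear_combination h1 - x * hB

lemma quad_step {x y : ℝ} {A B C : ℤ} (b' : ℤ)
    (hx : (A : ℝ) * x ^ 2 + B * x + C = 0) (hbx : (b' : ℝ) - x ≠ 0)
    (hy : y = ((b' : ℝ) - x)⁻¹) :
    ((A * b' ^ 2 + B * b' + C : ℤ) : ℝ) * y ^ 2
      + ((-(2 * A * b' + B) : ℤ) : ℝ) * y + ((A : ℤ) : ℝ) = 0 := by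
  subst hy
  push_cast
  field_simp
  linear_combination hx

theorem stmt_9 (w : ℝ) (hw : Irrational w) (a b c : ℤ) (ha : a ≠ 0)
    (hq : (a : ℝ) * w ^ 2 + (b : ℝ) * w + (c : ℝ) = 0) :
    (∃ p : ℕ, 0 < p ∧ ∀ i, mDigit w (i + p) = mDigit w i) ↔
      (0 < -(b : ℝ) / (a : ℝ) - w ∧ -(b : ℝ) / (a : ℝ) - w < 1 ∧ 1 < w) := by
  have haR : (a : ℝ) ≠ 0 := Int.cast_ne_zero.mpr ha
  have haQ : (a : ℚ) ≠ 0 := Int.cast_ne_zero.mpr ha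
  set v : ℝ := -(b : ℝ) / (a : ℝ) - w with hvdef
  set sQ : ℚ := -(b : ℚ) / (a : ℚ) with hsQ
  set pQ : ℚ := (c : ℚ) / (a : ℚ) with hpQ
  have hs : w + v = (sQ : ℝ) := by rw [hvdef, hsQ]; push_cast; ring
  have hp : w * v = (pQ : ℝ) := by
    rw [hvdef, hpQ]; push_cast; field_simp; linear_combination -hq
  have hvirr : Irrational v := by
    rw [show v = (sQ : ℝ) - w by linarith]; exact hw.ratCast_sub (q := sQ)
  have hvne : v ≠ w := by
    intro h
    apply hw
    refine ⟨sQ / 2, ?_⟩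
    have : w + w = (sQ : ℝ) := by rw [← hs, h]
    push_cast
    linarith
  have hqv : (a : ℝ) * v ^ 2 + (b : ℝ) * v + (c : ℝ) = 0 := by
    have key : (a : ℝ) * ((a : ℝ) * v ^ 2 + (b : ℝ) * v + (c : ℝ))
        = (a : ℝ) * ((a : ℝ) * w ^ 2 + (b : ℝ) * w + (c : ℝ)) := by
      rw [hvdef]; field_simp; ring
    rw [hq, mul_zero] at key
    exact (mul_eq_zero.mp key).resolve_left haR
  have hUsucc : ∀ n, cIter w v (n + 1) = ((mDigit w n : ℝ) - cIter w v n)⁻¹ :=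
    fun n => rfl
  have hUirr : ∀ n, Irrational (cIter w v n) := by
    intro n
    obtain ⟨q, r, hr, _, hu⟩ := cIter_rep hw hs hp n
    rw [hu]
    exact irr_comb hvirr hr
  constructor
  · rintro ⟨p, hp0, hper⟩
    have hWp : mIter w p = w := by
      apply eq_of_digits_eq (irr_mIter hw p) hw
      intro n
      show (⌈mIter (mIter w p) n⌉ : ℤ) = _
      rw [← mIter_add]
      exact hper n
    have hXper : ∀ n, mIter w (n + p) = mIter w n := fun n => by
      rw [mIter_add, hWp]
    have hUper : ∀ n, cIter w v (n + p) = cIter w v n :=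
      fun n => cIter_fun hw hs hp (hXper n)
    have hUkp : ∀ k, cIter w v (k * p) = v := by
      intro k
      induction k with
      | zero => simp [cIter]
      | succ j ih => rw [show (j + 1) * p = j * p + p by ring, hUper, ih]
    have h1w : 1 < w := by
      obtain ⟨m, rfl⟩ : ∃ m, p = m + 1 := ⟨p - 1, by omega⟩
      rw [← hWp]
      exact one_lt_mIter hw m
    have hD2 : ∀ n, 2 ≤ mDigit w n := by
      intro n
      cases n with
      | zero => exact two_le_digit_of_one_lt (by rwa [mIter_zero])
      | succ m => exact two_le_digit_of_one_lt (one_lt_mIter hw m)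
    have hinv : ∀ n, 0 < cIter w v n ∧ cIter w v n < 1 →
        0 < cIter w v (n + 1) ∧ cIter w v (n + 1) < 1 := by
      intro n ⟨h0, h1⟩
      have hb : (2 : ℝ) ≤ mDigit w n := by exact_mod_cast hD2 n
      have hgt : 1 < (mDigit w n : ℝ) - cIter w v n := by linarith
      rw [hUsucc]
      constructor
      · positivity
      · rw [inv_lt_one_iff₀]; right; exact hgt
    have hesc : ∃ N, 0 < cIter w v N ∧ cIter w v N < 1 := by
      by_contra hnot
      push_neg at hnot
      have hbox : ∀ n, (mDigit w n : ℝ) - 1 < cIter w v n ∧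
          cIter w v n < mDigit w n := by
        intro n
        by_contra hbad
        rw [not_and_or] at hbad
        have hirr := hUirr n
        rcases hbad with hlo | hhi
        · push_neg at hlo
          have hlt : cIter w v n < (mDigit w n : ℝ) - 1 :=
            lt_of_le_of_ne hlo (by
              intro h
              exact (h ▸ hirr) ⟨(mDigit w n : ℚ) - 1, by push_cast; ring⟩)
          have hgt : 1 < (mDigit w n : ℝ) - cIter w v n := by linarith
          have h0 : 0 < cIter w v (n + 1) := by rw [hUsucc]; positivity
          have h1 : cIter w v (n + 1) < 1 := by
            rw [hUsucc, inv_lt_one_iff₀]; right; exact hgt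
          exact absurd h1 (not_lt.mpr (hnot (n + 1) h0))
        · push_neg at hhi
          have hlt : (mDigit w n : ℝ) < cIter w v n :=
            lt_of_le_of_ne hhi (by
              intro h
              exact (h.symm ▸ hirr) ⟨(mDigit w n : ℚ), by push_cast; ring⟩)
          have hneg : cIter w v (n + 1) < 0 := by
            rw [hUsucc]
            exact inv_lt_zero.mpr (by linarith)
          have hb2 : (2 : ℝ) ≤ mDigit w (n + 1) := by exact_mod_cast hD2 (n + 1)
          have hgt : 1 < (mDigit w (n + 1) : ℝ) - cIter w v (n + 1) := by linarith
          have h0 : 0 < cIter w v (n + 2) := by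
            rw [hUsucc]; positivity
          have h1 : cIter w v (n + 2) < 1 := by
            rw [hUsucc, inv_lt_one_iff₀]; right; exact hgt
          exact absurd h1 (not_lt.mpr (hnot (n + 2) h0))
      have hsame : ∀ n, mIter v n = cIter w v n ∧ mDigit v n = mDigit w n := by
        intro n
        induction n with
        | zero =>
            refine ⟨rfl, ?_⟩
            show (⌈mIter v 0⌉ : ℤ) = ⌈mIter w 0⌉
            rw [mIter_zero, mIter_zero]
            have h := hbox 0
            have : ⌈v⌉ = mDigit w 0 := by
              rw [Int.ceil_eq_iff]
              exact ⟨h.1, le_of_lt h.2⟩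
            rw [this]; rfl
        | succ k ih =>
            have hx : mIter v (k + 1) = cIter w v (k + 1) := by
              rw [mIter_succ, hUsucc, ih.1, ih.2]
            refine ⟨hx, ?_⟩
            show (⌈mIter v (k+1)⌉ : ℤ) = mDigit w (k + 1)
            rw [hx]
            have h := hbox (k + 1)
            rw [Int.ceil_eq_iff]
            exact ⟨h.1, le_of_lt h.2⟩
      have : v = w := by
        apply eq_of_digits_eq hvirr hw
        intro n
        exact (hsame n).2
      exact hvne this
    obtain ⟨N, hN⟩ := hesc
    have hstay : ∀ k, 0 < cIter w v (N + k) ∧ cIter w v (N + k) < 1 := by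
      intro k
      induction k with
      | zero => simpa using hN
      | succ j ih => exact (show N + (j+1) = (N + j) + 1 by ring) ▸ hinv (N + j) ih
    have hNp : N ≤ N * p := Nat.le_mul_of_pos_right N hp0
    have hv01 := hstay (N * p - N)
    rw [show N + (N * p - N) = N * p by omega, hUkp N] at hv01
    exact ⟨hv01.1, hv01.2, h1w⟩
  · rintro ⟨hv0, hv1, hw1⟩
    have hX : ∀ n, 1 < mIter w n := by
      intro n
      cases n with
      | zero => rwa [mIter_zero]
      | succ m => exact one_lt_mIter hw m
    have hD2 : ∀ n, 2 ≤ mDigit w n := fun n => two_le_digit_of_one_lt (hX n)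
    have hU : ∀ n, 0 < cIter w v n ∧ cIter w v n < 1 := by
      intro n
      induction n with
      | zero => exact ⟨hv0, hv1⟩
      | succ k ih =>
          have hb : (2 : ℝ) ≤ mDigit w k := by exact_mod_cast hD2 k
          have hgt : 1 < (mDigit w k : ℝ) - cIter w v k := by linarith [ih.1, ih.2]
          rw [hUsucc]
          exact ⟨by positivity, by rw [inv_lt_one_iff₀]; right; exact hgt⟩
    -- the quadratic triple along the orbit
    have hT : ∀ n, ∃ A B C : ℤ, 0 < A ∧
        (A : ℝ) * (mIter w n) ^ 2 + B * mIter w n + C = 0 ∧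
        (A : ℝ) * (cIter w v n) ^ 2 + B * cIter w v n + C = 0 ∧
        B ^ 2 - 4 * A * C = b ^ 2 - 4 * a * c := by
      intro n
      induction n with
      | zero =>
          rcases lt_or_gt_of_ne ha with hneg | hpos
          · refine ⟨-a, -b, -c, by omega, ?_, ?_, by ring⟩
            · push_cast; rw [mIter_zero]; linarith [hq]
            · push_cast
              show -(a:ℝ) * (cIter w v 0)^2 + _ + _ = 0
              have : cIter w v 0 = v := rfl
              rw [this]; linarith [hqv]
          · refine ⟨a, b, c, hpos, ?_, ?_, rfl⟩
            · rw [mIter_zero]; exact hq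
            · show (a:ℝ) * (cIter w v 0)^2 + _ + _ = 0
              have : cIter w v 0 = v := rfl
              rw [this]; exact hqv
      | succ k ih =>
          obtain ⟨A, B, C, hA, hxq, huq, hdisc⟩ := ih
          set x := mIter w k with hxdef
          set u := cIter w v k with hudef
          set b' : ℤ := mDigit w k with hb'def
          have hAR : (A : ℝ) ≠ 0 := by positivity
          have hxu : x ≠ u := by
            have h1 := (hU k).2
            have h2 := hX k
            intro h
            rw [hxdef, hudef] at h
            rw [h] at h2; linarith
          obtain ⟨hB, hC⟩ := vieta hAR hxu hxq huq
          have hxmem := mIter_mem hw k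
          have hbx : 0 < (b' : ℝ) - x := by linarith [hxmem.2]
          have hb2 : (2 : ℝ) ≤ (b' : ℝ) := by exact_mod_cast hD2 k
          have hbu : 0 < (b' : ℝ) - u := by linarith [(hU k).2]
          have hApos : (0 : ℝ) < ((A * b' ^ 2 + B * b' + C : ℤ) : ℝ) := by
            have hfac : ((A * b' ^ 2 + B * b' + C : ℤ) : ℝ)
                = (A : ℝ) * ((b' : ℝ) - x) * ((b' : ℝ) - u) := by
              push_cast
              rw [hB, hC]
              ring
            rw [hfac]
            have : (0:ℝ) < A := by positivity
            positivity
          refine ⟨A * b' ^ 2 + B * b' + C, -(2 * A * b' + B), A, by exact_mod_cast hApos,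
            ?_, ?_, ?_⟩
          · exact quad_step b' hxq (ne_of_gt hbx) (mIter_succ w k)
          · exact quad_step b' huq (ne_of_gt hbu) (hUsucc k)
          · rw [← hdisc]; ring
    choose fA fB fC hfA hfx hfu hfd using hT
    set D : ℤ := b ^ 2 - 4 * a * c with hDdef
    -- bounds on the triples
    have hbound : ∀ n, 1 ≤ fA n ∧ fA n ≤ D ∧ 1 ≤ fC n ∧ fC n ≤ D ∧
        -(D + 4 * D * D) ≤ fB n ∧ fB n ≤ -3 := by
      intro n
      have hA := hfA n
      have hAR : ((fA n : ℝ)) ≠ 0 := by positivity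
      have hxu : mIter w n ≠ cIter w v n := by
        have h1 := (hU n).2
        have h2 := hX n
        intro h; rw [h] at h2; linarith
      obtain ⟨hB, hC⟩ := vieta hAR hxu (hfx n) (hfu n)
      have hx1 := hX n
      have hu0 := (hU n).1
      have hu1 := (hU n).2
      have hCpos : (0 : ℝ) < fC n := by
        rw [hC]
        have : (0:ℝ) < fA n := by positivity
        positivity
      have hC1 : 1 ≤ fC n := by
        have : (0 : ℤ) < fC n := by exact_mod_cast hCpos
        omega
      have hABC : (fA n : ℝ) + fB n + fC n < 0 := by
        have : (fA n : ℝ) + fB n + fC n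
            = (fA n : ℝ) * (1 - mIter w n) * (1 - cIter w v n) := by
          rw [hB, hC]; ring
        rw [this]
        have hA0 : (0:ℝ) < fA n := by positivity
        nlinarith [mul_pos (mul_pos hA0 (by linarith : (0:ℝ) < mIter w n - 1))
          (by linarith : (0:ℝ) < 1 - cIter w v n)]
      have hABCz : fA n + fB n + fC n ≤ -1 := by
        have h0 : ((fA n + fB n + fC n : ℤ) : ℝ) < 0 := by push_cast; linarith
        have h1 : (fA n + fB n + fC n : ℤ) < 0 := by exact_mod_cast h0
        omega
      have hdn := hfd n
      have hBneg : fB n ≤ -(fA n + fC n + 1) := by omega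
      have hBsq : (fA n + fC n + 1) ^ 2 ≤ fB n ^ 2 := by nlinarith
      have hsum : 2 * (fA n + fC n) + 1 ≤ D := by nlinarith [sq_nonneg (fA n - fC n)]
      have hA1 : 1 ≤ fA n := hA
      refine ⟨hA1, by omega, hC1, by omega, ?_, by omega⟩
      have hD0 : 0 < D := by omega
      have h4AC : 4 ≤ 4 * fA n * fC n := by nlinarith
      have hBsqle : fB n ^ 2 ≤ D + 4 * D * D := by nlinarith
      nlinarith [sq_nonneg (fB n + (D + 4 * D * D))]
    -- pigeonhole
    set S : Finset (ℤ × ℤ × ℤ) :=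
      Finset.Icc (1, -(D + 4 * D * D), 1) (D, -3, D) with hSdef
    have hmaps : ∀ n ∈ Finset.range (S.card + 1), (fun n => (fA n, fB n, fC n)) n ∈ S := by
      intro n _
      obtain ⟨h1, h2, h3, h4, h5, h6⟩ := hbound n
      simp only [hSdef, Finset.mem_Icc, Prod.le_def]
      exact ⟨⟨h1, h5, h3⟩, h2, h6, h4⟩
    obtain ⟨m, _, n, _, hmn, hfeq⟩ :=
      Finset.exists_ne_map_eq_of_card_lt_of_maps_to (by simp) hmaps
    have hper_of_eq : ∀ m n : ℕ, m < n → mIter w m = mIter w n →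
        ∃ p : ℕ, 0 < p ∧ ∀ i, mDigit w (i + p) = mDigit w i := by
      intro m n hmn' heq
      set d : ℕ := n - m with hddef
      have hd : n = m + d := by omega
      have hstep : ∀ j j', mIter w (j + 1) = mIter w (j' + 1) →
          mIter w j = mIter w j' := by
        intro j j' h
        have hu : cIter w v (j + 1) = cIter w v (j' + 1) := cIter_fun hw hs hp h
        have hbj : ∀ i : ℕ, ⌈(cIter w v (i + 1))⁻¹⌉ = mDigit w i := by
          intro i
          have h0 := (hU i).1
          have h1 := (hU i).2
          have hb : (2 : ℝ) ≤ mDigit w i := by exact_mod_cast hD2 i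
          have : (cIter w v (i + 1))⁻¹ = (mDigit w i : ℝ) - cIter w v i := by
            rw [hUsucc, inv_inv]
          rw [this, Int.ceil_eq_iff]
          constructor <;> [linarith; linarith]
        have hdig : mDigit w j = mDigit w j' := by
          rw [← hbj j, ← hbj j', hu]
        have hxj : ∀ i : ℕ, mIter w i = (mDigit w i : ℝ) - (mIter w (i + 1))⁻¹ := by
          intro i
          have hmem := mIter_mem hw i
          rw [mIter_succ, inv_inv]
          ring
        rw [hxj j, hxj j', h, hdig]
      have hdesc : ∀ k, mIter w k = mIter w (k + d) → mIter w 0 = mIter w (0 + d) := by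
        intro k
        induction k with
        | zero => exact id
        | succ j ih =>
            intro h
            exact ih (hstep j (j + d) (by rw [show j + d + 1 = j + 1 + d by omega]; exact h))
      have hW : mIter w d = w := by
        have := hdesc m (by rw [← hd]; exact heq)
        rw [mIter_zero] at this
        simpa using this.symm
      refine ⟨d, by omega, fun i => ?_⟩
      show (⌈mIter w (i + d)⌉ : ℤ) = ⌈mIter w i⌉
      rw [mIter_add, hW]
    have hroot : ∀ i j : ℕ, fA i = fA j → fB i = fB j → fC i = fC j →
        mIter w i = mIter w j := by
      intro i j hA' hB' hC'
      have hAi := hfA i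
      have hAR : ((fA i : ℝ)) ≠ 0 := by positivity
      have hxu : mIter w i ≠ cIter w v i := by
        have h1 := (hU i).2
        have h2 := hX i
        intro h; rw [h] at h2; linarith
      obtain ⟨hB, hC⟩ := vieta hAR hxu (hfx i) (hfu i)
      have hxj : (fA i : ℝ) * (mIter w j) ^ 2 + fB i * mIter w j + fC i = 0 := by
        rw [hA', hB', hC']; exact hfx j
      have hfac : (fA i : ℝ) * (mIter w j - mIter w i) * (mIter w j - cIter w v i) = 0 := by
        have hid : (fA i : ℝ) * (mIter w j - mIter w i) * (mIter w j - cIter w v i)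
            = (fA i : ℝ) * (mIter w j) ^ 2 + fB i * mIter w j + fC i := by
          rw [hB, hC]; ring
        rw [hid]; exact hxj
      rcases mul_eq_zero.mp hfac with h | h
      · rcases mul_eq_zero.mp h with h' | h'
        · exact absurd h' hAR
        · exact (sub_eq_zero.mp h').symm
      · exfalso
        have h1 := hX j
        have h2 := (hU i).2
        rw [sub_eq_zero.mp h] at h1
        linarith
    have h1 : fA m = fA n := congrArg Prod.fst hfeq
    have h2 : fB m = fB n := congrArg (fun t => t.2.1) hfeq
    have h3 : fC m = fC n := congrArg (fun t => t.2.2) hfeq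
    rcases lt_or_gt_of_ne hmn with h | h
    · exact hper_of_eq m n h (hroot m n h1 h2 h3)
    · exact hper_of_eq n m h (hroot n m h1.symm h2.symm h3.symm)
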